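/- Let k_1, ..., k_t and n be positive integers and ε > 0 a small constant such that k_1 ≥ k_2 ≥ ... ≥ k_t, the sum k_1 + ... + k_t ≤ n(1-ε), and n is sufficiently large (depending on k_1 and ε). For i in [t], let F_i ⊆ C([n], k_i) with |F_1|·|F_2| > C(n-1, k_1-1)·C(n-1, k_2-1) when t = 2, and ∏_{i=1}^t |F_i| > C(n-1, k_1-1)·C(n-1, k_2-1)·∏_{i=3}^t C(n, k_i) when t ≥ 3. Then {F_1, ..., F_t} admits a rainbow matching. -/

import Mathlib

open Finset

namespace RMP

variable {α : Type*} [DecidableEq α]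

/-- Sets of size `a` inside `V` containing a fixed point `x`: at most `C(|V|-1, a-1)`. -/
lemma card_mem_filter_le (V : Finset α) (a : ℕ) (A : Finset (Finset α))
    (hA : A ⊆ V.powersetCard a) (x : α) :
    (A.filter (fun f => x ∈ f)).card ≤ (V.card - 1).choose (a - 1) := by
  rcases (A.filter (fun f => x ∈ f)).eq_empty_or_nonempty with h | h
  · simp [h]
  · obtain ⟨f₀, hf₀⟩ := h
    simp only [mem_filter] at hf₀
    have hxV : x ∈ V := (mem_powersetCard.1 (hA hf₀.1)).1 hf₀.2
    have : (A.filter (fun f => x ∈ f)).card ≤ ((V.erase x).powersetCard (a - 1)).card := by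
      apply card_le_card_of_injOn (fun f => f.erase x)
      · intro f hf
        simp only [coe_filter, Set.mem_setOf_eq] at hf
        obtain ⟨hfA, hxf⟩ := hf
        obtain ⟨hfV, hfc⟩ := mem_powersetCard.1 (hA hfA)
        refine mem_powersetCard.2 ⟨?_, ?_⟩
        · intro y hy
          simp only [mem_erase] at hy ⊢
          exact ⟨hy.1, hfV hy.2⟩
        · rw [card_erase_of_mem hxf, hfc]
      · intro f hf g hg hfg
        simp only [coe_filter, Set.mem_setOf_eq] at hf hg
        have := congrArg (insert x) hfg
        rwa [insert_erase hf.2, insert_erase hg.2] at this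
    rwa [card_powersetCard, card_erase_of_mem hxV] at this

/-- Sets in a uniform family meeting a fixed set `T`: at most `|T| · C(|V|-1, a-1)`. -/
lemma card_meet_le (V : Finset α) (a : ℕ) (A : Finset (Finset α))
    (hA : A ⊆ V.powersetCard a) (T : Finset α) :
    (A.filter (fun f => ¬ Disjoint f T)).card ≤ T.card * ((V.card - 1).choose (a - 1)) := by
  have hsub : (A.filter (fun f => ¬ Disjoint f T)) ⊆
      T.biUnion (fun x => A.filter (fun f => x ∈ f)) := by
    intro f hf
    simp only [mem_filter] at hf
    obtain ⟨hfA, hfd⟩ := hf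
    rw [Finset.not_disjoint_iff] at hfd
    obtain ⟨x, hxf, hxT⟩ := hfd
    exact mem_biUnion.2 ⟨x, hxT, mem_filter.2 ⟨hfA, hxf⟩⟩
  calc (A.filter (fun f => ¬ Disjoint f T)).card
      ≤ (T.biUnion (fun x => A.filter (fun f => x ∈ f))).card := card_le_card hsub
    _ ≤ ∑ x ∈ T, (A.filter (fun f => x ∈ f)).card := card_biUnion_le
    _ ≤ ∑ _x ∈ T, (V.card - 1).choose (a - 1) := by
        exact Finset.sum_le_sum (fun x _ => card_mem_filter_le V a A hA x)
    _ = T.card * ((V.card - 1).choose (a - 1)) := by rw [Finset.sum_const, smul_eq_mul]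

/-- Restricting a family to sets avoiding `T` keeps it inside the smaller powersetCard. -/
lemma restrict_powersetCard (V : Finset α) (a : ℕ) (A : Finset (Finset α))
    (hA : A ⊆ V.powersetCard a) (T : Finset α) :
    (A.filter (fun f => Disjoint f T)) ⊆ (V \ T).powersetCard a := by
  intro f hf
  simp only [mem_filter] at hf
  obtain ⟨hfA, hfd⟩ := hf
  obtain ⟨hfV, hfc⟩ := mem_powersetCard.1 (hA hfA)
  refine mem_powersetCard.2 ⟨?_, hfc⟩
  intro y hy
  simp only [mem_sdiff]
  exact ⟨hfV hy, fun hyT => (Finset.disjoint_left.1 hfd hy) hyT⟩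

/-- Exact loss bound for restriction. -/
lemma card_le_add_restrict (V : Finset α) (a : ℕ) (A : Finset (Finset α))
    (hA : A ⊆ V.powersetCard a) (T : Finset α) :
    A.card ≤ (A.filter (fun f => Disjoint f T)).card + (V.card.choose a - (V \ T).card.choose a) := by
  classical
  have h1 : A.card = (A.filter (fun f => Disjoint f T)).card
      + (A.filter (fun f => ¬ Disjoint f T)).card := (card_filter_add_card_filter_not _).symm
  have h2 : (A.filter (fun f => ¬ Disjoint f T)) ⊆
      (V.powersetCard a).filter (fun f => ¬ Disjoint f T) := by
    intro f hf
    simp only [mem_filter] at hf ⊢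
    exact ⟨hA hf.1, hf.2⟩
  have h3 : ((V.powersetCard a).filter (fun f => ¬ Disjoint f T)).card
      = V.card.choose a - (V \ T).card.choose a := by
    have h4 : ((V.powersetCard a).filter (fun f => Disjoint f T)) = (V \ T).powersetCard a := by
      apply Finset.Subset.antisymm
      · exact restrict_powersetCard V a (V.powersetCard a) (fun f hf => hf) T
      · intro f hf
        obtain ⟨hfV, hfc⟩ := mem_powersetCard.1 hf
        refine mem_filter.2 ⟨mem_powersetCard.2 ⟨fun y hy => (mem_sdiff.1 (hfV hy)).1, hfc⟩, ?_⟩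
        exact Finset.disjoint_left.2 (fun y hy hyT => (mem_sdiff.1 (hfV hy)).2 hyT)
      
    have h5 : ((V.powersetCard a).filter (fun f => Disjoint f T)).card
        + ((V.powersetCard a).filter (fun f => ¬ Disjoint f T)).card = V.card.choose a := by
      rw [card_filter_add_card_filter_not, card_powersetCard]
    rw [h4, card_powersetCard] at h5
    omega
  have h6 := card_le_card h2
  omega

/-- Two-point containment bound. -/
lemma card_two_pts_le (V : Finset α) (b : ℕ) (B : Finset (Finset α))
    (hB : B ⊆ V.powersetCard b) (U : Finset α) (hU : ∀ f ∈ B, 2 ≤ (f ∩ U).card) :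
    B.card ≤ U.card * U.card * ((V.card - 2).choose (b - 2)) := by
  classical
  have hsub : B ⊆ (U ×ˢ U).biUnion
      (fun p => B.filter (fun f => p.1 ∈ f ∧ p.2 ∈ f ∧ p.1 ≠ p.2)) := by
    intro f hf
    have h2 := hU f hf
    obtain ⟨x, hx, y, hy, hxy⟩ := Finset.one_lt_card.1 h2
    simp only [mem_inter] at hx hy
    refine mem_biUnion.2 ⟨(x, y), mem_product.2 ⟨hx.2, hy.2⟩, ?_⟩
    exact mem_filter.2 ⟨hf, hx.1, hy.1, hxy⟩
  have hcard : ∀ p : α × α, (B.filter (fun f => p.1 ∈ f ∧ p.2 ∈ f ∧ p.1 ≠ p.2)).card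
      ≤ (V.card - 2).choose (b - 2) := by
    rintro ⟨x, y⟩
    rcases (B.filter (fun f => x ∈ f ∧ y ∈ f ∧ x ≠ y)).eq_empty_or_nonempty with h | h
    · simp [h]
    · obtain ⟨f₀, hf₀⟩ := h
      simp only [mem_filter] at hf₀
      obtain ⟨hf₀B, hxf₀, hyf₀, hxy⟩ := hf₀
      have hfV := (mem_powersetCard.1 (hB hf₀B)).1
      have hxV : x ∈ V := hfV hxf₀
      have hyV : y ∈ V := hfV hyf₀
      have : (B.filter (fun f => x ∈ f ∧ y ∈ f ∧ x ≠ y)).card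
          ≤ (((V.erase x).erase y).powersetCard (b - 2)).card := by
        apply card_le_card_of_injOn (fun f => (f.erase x).erase y)
        · intro f hf
          simp only [coe_filter, Set.mem_setOf_eq] at hf
          obtain ⟨hfB, hxf, hyf, _⟩ := hf
          obtain ⟨hfV', hfc⟩ := mem_powersetCard.1 (hB hfB)
          refine mem_powersetCard.2 ⟨?_, ?_⟩
          · intro z hz
            simp only [mem_erase] at hz ⊢
            exact ⟨hz.1, hz.2.1, hfV' hz.2.2⟩
          · rw [card_erase_of_mem (by simp [mem_erase, hyf, (Ne.symm hxy)]),
              card_erase_of_mem hxf, hfc]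
            omega
        · intro f hf g hg hfg
          simp only [coe_filter, Set.mem_setOf_eq] at hf hg
          have h1 := congrArg (insert y) hfg
          rw [insert_erase (by simp [mem_erase, hf.2.2.1, Ne.symm hf.2.2.2]),
            insert_erase (by simp [mem_erase, hg.2.2.1, Ne.symm hg.2.2.2])] at h1
          have h2 := congrArg (insert x) h1
          rwa [insert_erase hf.2.1, insert_erase hg.2.1] at h2
      rw [card_powersetCard] at this
      refine this.trans ?_
      have hcv : ((V.erase x).erase y).card = V.card - 1 - 1 := by
        rw [card_erase_of_mem (by simp [mem_erase, hyV, Ne.symm hxy]), card_erase_of_mem hxV]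
      rw [hcv]
      exact Nat.choose_le_choose _ (by omega)
  calc B.card ≤ ((U ×ˢ U).biUnion
        (fun p => B.filter (fun f => p.1 ∈ f ∧ p.2 ∈ f ∧ p.1 ≠ p.2))).card := card_le_card hsub
    _ ≤ ∑ p ∈ U ×ˢ U, (B.filter (fun f => p.1 ∈ f ∧ p.2 ∈ f ∧ p.1 ≠ p.2)).card := card_biUnion_le
    _ ≤ ∑ _p ∈ U ×ˢ U, (V.card - 2).choose (b - 2) := Finset.sum_le_sum (fun p _ => hcard p)
    _ = U.card * U.card * ((V.card - 2).choose (b - 2)) := by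
        rw [Finset.sum_const, smul_eq_mul, Finset.card_product]


/-- In the non-star case, there is a small set `U` meeting every member of `B` twice. -/
lemma cross_notstar_two_pts (V : Finset α) (a : ℕ) (A B : Finset (Finset α))
    (hA : A ⊆ V.powersetCard a)
    (hcr : ∀ e ∈ A, ∀ f ∈ B, ¬ Disjoint e f)
    (hne : A.Nonempty) (hnostar : ¬ ∃ x, ∀ e ∈ A, x ∈ e) :
    ∃ U : Finset α, U.card ≤ a + a * a ∧ ∀ f ∈ B, 2 ≤ (f ∩ U).card := by
  obtain ⟨e₀, he₀⟩ := hne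
  push_neg at hnostar
  choose ex hexA hexN using hnostar
  have hcarda : ∀ e ∈ A, e.card = a := fun e he => (mem_powersetCard.1 (hA he)).2
  refine ⟨e₀ ∪ e₀.biUnion ex, ?_, ?_⟩
  · calc (e₀ ∪ e₀.biUnion ex).card ≤ e₀.card + (e₀.biUnion ex).card := card_union_le _ _
      _ ≤ a + a * a := by
          have h2 : (e₀.biUnion ex).card ≤ a * a := by
            calc (e₀.biUnion ex).card ≤ ∑ x ∈ e₀, (ex x).card := card_biUnion_le
              _ = ∑ _x ∈ e₀, a := Finset.sum_congr rfl (fun x _ => hcarda _ (hexA x))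
              _ = a * a := by rw [Finset.sum_const, smul_eq_mul, hcarda _ he₀]
          have h3 := hcarda _ he₀
          omega
  · intro f hf
    have h1 := hcr e₀ he₀ f hf
    rw [Finset.not_disjoint_iff] at h1
    obtain ⟨x, hxe₀, hxf⟩ := h1
    have h2 := hcr (ex x) (hexA x) f hf
    rw [Finset.not_disjoint_iff] at h2
    obtain ⟨z, hzex, hzf⟩ := h2
    have hxz : x ≠ z := fun h => hexN x (h ▸ hzex)
    apply Finset.one_lt_card.2
    refine ⟨x, ?_, z, ?_, hxz⟩
    · exact mem_inter.2 ⟨hxf, mem_union_left _ hxe₀⟩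
    · exact mem_inter.2 ⟨hzf, mem_union_right _ (mem_biUnion.2 ⟨x, hxe₀, hzex⟩)⟩

/-- Asymmetric bound: if `A` is not a star and the pair is cross-intersecting, the product
of sizes is at most the star product. -/
lemma cross_asym (V : Finset α) (a b : ℕ) (hb : 1 ≤ b)
    (hV : 8 * (max a b) ^ 6 ≤ V.card)
    (A B : Finset (Finset α)) (hA : A ⊆ V.powersetCard a) (hB : B ⊆ V.powersetCard b)
    (hcr : ∀ e ∈ A, ∀ f ∈ B, ¬ Disjoint e f)
    (hAne : A.Nonempty) (hBne : B.Nonempty)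
    (hnostar : ¬ ∃ x, ∀ e ∈ A, x ∈ e) :
    A.card * B.card ≤ (V.card - 1).choose (a - 1) * (V.card - 1).choose (b - 1) := by
  obtain ⟨U, hUcard, hU2⟩ := cross_notstar_two_pts V a A B hA hcr hAne hnostar
  obtain ⟨f₀, hf₀⟩ := hBne
  set M := max a b with hM
  have hM1 : 1 ≤ M := le_trans hb (le_max_right a b)
  -- b ≥ 2
  have hb2 : 2 ≤ b := by
    have h1 := hU2 f₀ hf₀
    have h2 : (f₀ ∩ U).card ≤ f₀.card := card_le_card (inter_subset_left)
    have h3 : f₀.card = b := (mem_powersetCard.1 (hB hf₀)).2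
    omega
  -- |A| ≤ b * C(ν-1, a-1)
  have hA2 : A.card ≤ b * ((V.card - 1).choose (a - 1)) := by
    have heq : A.filter (fun e => ¬ Disjoint e f₀) = A := by
      apply filter_true_of_mem
      intro e he
      exact hcr e he f₀ hf₀
    calc A.card = (A.filter (fun e => ¬ Disjoint e f₀)).card := by rw [heq]
      _ ≤ f₀.card * ((V.card - 1).choose (a - 1)) := card_meet_le V a A hA f₀
      _ = b * ((V.card - 1).choose (a - 1)) := by rw [(mem_powersetCard.1 (hB hf₀)).2]
  -- |B| ≤ (a+a*a)^2 * C(ν-2, b-2)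
  have hB2 : B.card ≤ (a + a * a) * (a + a * a) * ((V.card - 2).choose (b - 2)) := by
    have := card_two_pts_le V b B hB U hU2
    calc B.card ≤ U.card * U.card * ((V.card - 2).choose (b - 2)) := this
      _ ≤ (a + a * a) * (a + a * a) * ((V.card - 2).choose (b - 2)) := by
          exact Nat.mul_le_mul (Nat.mul_le_mul hUcard hUcard) le_rfl
  -- key numeric step : b * (a+a*a)^2 * C(ν-2,b-2) ≤ C(ν-1,b-1)
  have hkey : b * ((a + a * a) * (a + a * a)) * ((V.card - 2).choose (b - 2))
      ≤ (V.card - 1).choose (b - 1) := by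
    have hid : (V.card - 1).choose (b - 1) * (b - 1)
        = (V.card - 1).choose (b - 2) * ((V.card - 1) - (b - 2)) := by
      have := Nat.choose_succ_right_eq (V.card - 1) (b - 2)
      have hb' : b - 2 + 1 = b - 1 := by omega
      rwa [hb'] at this
    have hmono : (V.card - 2).choose (b - 2) ≤ (V.card - 1).choose (b - 2) :=
      Nat.choose_le_choose _ (by omega)
    have hnum : b * ((a + a * a) * (a + a * a)) * (b - 1) ≤ (V.card - 1) - (b - 2) := by
      have h1 : a ≤ M := le_max_left a b
      have h2 : b ≤ M := le_max_right a b
      have h3 : b * ((a + a * a) * (a + a * a)) * (b - 1) ≤ 4 * M ^ 6 := by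
        have ha2 : a + a * a ≤ 2 * M ^ 2 := by nlinarith
        calc b * ((a + a * a) * (a + a * a)) * (b - 1)
            ≤ M * ((2 * M ^ 2) * (2 * M ^ 2)) * M := by
              exact Nat.mul_le_mul (Nat.mul_le_mul h2 (Nat.mul_le_mul ha2 ha2)) (by omega)
          _ = 4 * M ^ 6 := by ring
      have h4 : 8 * M ^ 6 ≤ V.card := hV
      have h5 : b ≤ M := h2
      have h6 : M ≤ M ^ 6 := by
        calc M = M * 1 := (mul_one M).symm
          _ ≤ M ^ 6 := by nlinarith [pow_pos (Nat.lt_of_lt_of_le Nat.zero_lt_one hM1) 5]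
      omega
    -- combine: multiply by (b-1)
    have hfin : (b * ((a + a * a) * (a + a * a)) * ((V.card - 2).choose (b - 2))) * (b - 1)
        ≤ ((V.card - 1).choose (b - 1)) * (b - 1) := by
      calc (b * ((a + a * a) * (a + a * a)) * ((V.card - 2).choose (b - 2))) * (b - 1)
          = (b * ((a + a * a) * (a + a * a)) * (b - 1)) * ((V.card - 2).choose (b - 2)) := by ring
        _ ≤ ((V.card - 1) - (b - 2)) * ((V.card - 1).choose (b - 2)) :=
            Nat.mul_le_mul hnum hmono
        _ = ((V.card - 1).choose (b - 1)) * (b - 1) := by rw [hid]; ring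
    exact Nat.le_of_mul_le_mul_right hfin (by omega)
  calc A.card * B.card
      ≤ (b * ((V.card - 1).choose (a - 1))) *
        ((a + a * a) * (a + a * a) * ((V.card - 2).choose (b - 2))) := Nat.mul_le_mul hA2 hB2
    _ = ((V.card - 1).choose (a - 1)) *
        (b * ((a + a * a) * (a + a * a)) * ((V.card - 2).choose (b - 2))) := by ring
    _ ≤ ((V.card - 1).choose (a - 1)) * ((V.card - 1).choose (b - 1)) :=
        Nat.mul_le_mul le_rfl hkey

/-- Cross-intersecting product theorem (for large ground sets): if the product of sizes
beats the star product, there is a disjoint pair. -/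
lemma cross2 (V : Finset α) (a b : ℕ) (ha : 1 ≤ a) (hb : 1 ≤ b)
    (hV : 8 * (max a b) ^ 6 ≤ V.card)
    (A B : Finset (Finset α)) (hA : A ⊆ V.powersetCard a) (hB : B ⊆ V.powersetCard b)
    (h : (V.card - 1).choose (a - 1) * ((V.card - 1).choose (b - 1)) < A.card * B.card) :
    ∃ e ∈ A, ∃ f ∈ B, Disjoint e f := by
  by_contra hcon
  push_neg at hcon
  have hAne : A.Nonempty := by
    rcases A.eq_empty_or_nonempty with h' | h'
    · rw [h'] at h; simp at h
    · exact h'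
  have hBne : B.Nonempty := by
    rcases B.eq_empty_or_nonempty with h' | h'
    · rw [h'] at h; simp at h
    · exact h'
  by_cases hstarA : ∃ x, ∀ e ∈ A, x ∈ e
  · by_cases hstarB : ∃ x, ∀ f ∈ B, x ∈ f
    · obtain ⟨x, hx⟩ := hstarA
      obtain ⟨y, hy⟩ := hstarB
      have h1 : A.card ≤ (V.card - 1).choose (a - 1) := by
        have : A.filter (fun f => x ∈ f) = A := filter_true_of_mem (fun e he => hx e he)
        calc A.card = (A.filter (fun f => x ∈ f)).card := by rw [this]
          _ ≤ (V.card - 1).choose (a - 1) := card_mem_filter_le V a A hA x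
      have h2 : B.card ≤ (V.card - 1).choose (b - 1) := by
        have : B.filter (fun f => y ∈ f) = B := filter_true_of_mem (fun e he => hy e he)
        calc B.card = (B.filter (fun f => y ∈ f)).card := by rw [this]
          _ ≤ (V.card - 1).choose (b - 1) := card_mem_filter_le V b B hB y
      exact absurd h (not_lt.2 (Nat.mul_le_mul h1 h2))
    · have hbound := cross_asym V b a ha (by rwa [max_comm]) B A hB hA
        (fun f hf e he => fun hd => hcon e he f hf hd.symm) hBne hAne hstarB
      rw [mul_comm] at hbound
      exact absurd h (not_lt.2 (by linarith [hbound]))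
  · have hbound := cross_asym V a b hb hV A B hA hB hcon hAne hBne hstarA
    exact absurd h (not_lt.2 hbound)


/-- Ordered greedy choice of a rainbow matching under exact prefix conditions. -/
lemma greedyChain {ι : Type*} [DecidableEq ι] (kk : ι → ℕ) :
    ∀ (is : List ι) (V : Finset α) (fam : ι → Finset (Finset α)), is.Nodup →
    (∀ i ∈ is, fam i ⊆ V.powersetCard (kk i)) →
    (∀ (l₁ l₂ : List ι) (i : ι), is = l₁ ++ i :: l₂ →
       V.card.choose (kk i) < (fam i).card + (V.card - (l₁.map kk).sum).choose (kk i)) →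
    ∃ e : ι → Finset α, (∀ i ∈ is, e i ∈ fam i) ∧
      List.Pairwise (fun i j => Disjoint (e i) (e j)) is := by
  intro is
  induction is with
  | nil => intro V fam _ _ _; exact ⟨fun _ => ∅, by simp, by simp⟩
  | cons i₀ rest ih =>
    intro V fam hnd hmem hcond
    have h0 := hcond [] rest i₀ rfl
    simp only [List.map_nil, List.sum_nil, Nat.sub_zero] at h0
    have hne : (fam i₀).Nonempty := card_pos.1 (by omega)
    obtain ⟨e₀, he₀⟩ := hne
    have he₀V : e₀ ⊆ V ∧ e₀.card = kk i₀ :=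
      mem_powersetCard.1 (hmem i₀ (List.mem_cons_self) he₀)
    have hi₀rest : i₀ ∉ rest := (List.nodup_cons.1 hnd).1
    obtain ⟨e, hmem', hpw⟩ := ih (V \ e₀) (fun i => (fam i).filter (fun f => Disjoint f e₀))
      (List.nodup_cons.1 hnd).2
      (by
        intro i hi
        exact restrict_powersetCard V (kk i) (fam i)
          (hmem i (List.mem_cons_of_mem _ hi)) e₀)
      (by
        intro l₁ l₂ i hsplit
        beta_reduce
        have hc := hcond (i₀ :: l₁) l₂ i (by rw [hsplit]; rfl)
        have hiMem : i ∈ i₀ :: rest := by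
          rw [hsplit]
          exact List.mem_cons_of_mem _ (List.mem_append_right _ (List.mem_cons_self))
        have hloss := card_le_add_restrict V (kk i) (fam i) (hmem i hiMem) e₀
        have hcard' : (V \ e₀).card = V.card - kk i₀ := by
          rw [card_sdiff_of_subset he₀V.1, he₀V.2]
        rw [hcard']
        have hsum : ((i₀ :: l₁).map kk).sum = kk i₀ + (l₁.map kk).sum := by simp
        rw [hsum] at hc
        have hBA : (V.card - kk i₀).choose (kk i) ≤ V.card.choose (kk i) :=
          Nat.choose_le_choose _ (by omega)
        have hsub2 : V.card - kk i₀ - (l₁.map kk).sum = V.card - (kk i₀ + (l₁.map kk).sum) := by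
          omega
        rw [hsub2]
        rw [hcard'] at hloss
        omega)
    refine ⟨fun j => if j = i₀ then e₀ else e j, ?_, ?_⟩
    · intro i hi
      rcases List.mem_cons.1 hi with h | h
      · simp [h, he₀]
      · have hne : i ≠ i₀ := fun hh => hi₀rest (hh ▸ h)
        simp only [if_neg hne]
        exact Finset.mem_of_mem_filter _ (hmem' i h)
    · rw [List.pairwise_cons]
      constructor
      · intro j hj
        have hne : j ≠ i₀ := fun hh => hi₀rest (hh ▸ hj)
        simp only [if_pos rfl, if_neg hne]
        have := hmem' j hj
        simp only [mem_filter] at this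
        exact this.2.symm
      · apply List.Pairwise.imp_of_mem ?_ hpw
        intro i j hi hj hd
        have hne1 : i ≠ i₀ := fun hh => hi₀rest (hh ▸ hi)
        have hne2 : j ≠ i₀ := fun hh => hi₀rest (hh ▸ hj)
        simpa [if_neg hne1, if_neg hne2] using hd

/-- `n·C(n-1,k-1) = k·C(n,k)`. -/
lemma pa5 (n k : ℕ) (hk : 1 ≤ k) (hn : 1 ≤ n) :
    n * (n - 1).choose (k - 1) = k * n.choose k := by
  have h := Nat.add_one_mul_choose_eq (n - 1) (k - 1)
  have h1 : n - 1 + 1 = n := by omega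
  have h2 : k - 1 + 1 = k := by omega
  rw [h1, h2] at h
  rw [h]; ring

/-- Telescoping bound: `C(m,k) ≤ C(m-q,k) + q·C(m-1,k-1)`. -/
lemma pa6 (m k : ℕ) (hk : 1 ≤ k) : ∀ q : ℕ, m.choose k ≤ (m - q).choose k + q * ((m - 1).choose (k - 1)) := by
  intro q
  induction q with
  | zero => simp
  | succ q ihq =>
    have hstep : (m - q).choose k ≤ (m - (q + 1)).choose k + (m - 1).choose (k - 1) := by
      rcases Nat.eq_zero_or_pos (m - q) with h | h
      · rw [h]
        have : m - (q+1) = 0 := by omega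
        rw [this]
        omega
      · have hpas : (m - q).choose k = (m - q - 1).choose (k - 1) + (m - q - 1).choose k := by
          have := Nat.choose_succ_succ (m - q - 1) (k - 1)
          simp only [Nat.succ_eq_add_one] at this
          have h1 : m - q - 1 + 1 = m - q := by omega
          have h2 : k - 1 + 1 = k := by omega
          rwa [h1, h2] at this
        have hmono1 : (m - (q + 1)).choose (k - 1) ≤ (m - 1).choose (k - 1) :=
          Nat.choose_le_choose _ (by omega)
        have heq : m - q - 1 = m - (q + 1) := by omega
        rw [hpas, heq]
        omega
    calc m.choose k ≤ (m - q).choose k + q * ((m - 1).choose (k - 1)) := ihq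
      _ ≤ (m - (q + 1)).choose k + (m - 1).choose (k - 1) + q * ((m - 1).choose (k - 1)) := by
          omega
      _ = (m - (q + 1)).choose k + (q + 1) * ((m - 1).choose (k - 1)) := by ring

/-- Binomial ratio bound. -/
lemma pa4 (n m k : ℕ) : n.choose k * (m + 1 - k) ^ k ≤ m.choose k * n ^ k := by
  have h1 : Nat.descFactorial n k * (m + 1 - k) ^ k ≤ n ^ k * Nat.descFactorial m k :=
    Nat.mul_le_mul (Nat.descFactorial_le_pow n k) (Nat.pow_sub_le_descFactorial m k)
  have h2 : Nat.descFactorial n k = k.factorial * n.choose k :=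
    Nat.descFactorial_eq_factorial_mul_choose n k
  have h3 : Nat.descFactorial m k = k.factorial * m.choose k :=
    Nat.descFactorial_eq_factorial_mul_choose m k
  rw [h2, h3] at h1
  have h4 : k.factorial * (n.choose k * (m + 1 - k) ^ k) ≤ k.factorial * (m.choose k * n ^ k) := by
    calc k.factorial * (n.choose k * (m + 1 - k) ^ k)
        = k.factorial * n.choose k * (m + 1 - k) ^ k := by ring
      _ ≤ n ^ k * (k.factorial * m.choose k) := h1
      _ = k.factorial * (m.choose k * n ^ k) := by ring
  exact Nat.le_of_mul_le_mul_left h4 (Nat.factorial_pos k)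

/-- `(1 - 1/G)^G ≤ 1/2`. -/
lemma pa1 (G : ℕ) (hG : 1 ≤ G) : ((1 : ℝ) - 1 / G) ^ G ≤ 1 / 2 := by
  rcases eq_or_lt_of_le hG with h | h
  · rw [← h]; norm_num
  · have hG2 : (2 : ℝ) ≤ G := by exact_mod_cast h
    set g : ℝ := (G : ℝ) with hg
    have hg1 : (1 : ℝ) ≤ g - 1 := by linarith
    have hkey : (2 : ℝ) ≤ (1 + 1 / (g - 1)) ^ G := by
      have hb := one_add_mul_le_pow (a := 1 / (g - 1))
        (le_trans (by norm_num : (-2 : ℝ) ≤ 0) (by positivity)) G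
      have : (1 : ℝ) + G * (1 / (g - 1)) ≥ 2 := by
        rw [ge_iff_le, ← hg]
        have : g / (g - 1) ≥ 1 := by
          rw [ge_iff_le, le_div_iff₀ (by linarith)]
          linarith
        calc (2 : ℝ) = 1 + 1 := by norm_num
          _ ≤ 1 + g / (g - 1) := by linarith
          _ = 1 + g * (1 / (g - 1)) := by ring
      linarith
    have heq : (1 : ℝ) - 1 / g = ((1 + 1 / (g - 1)))⁻¹ := by
      have hgne : g ≠ 0 := by linarith
      have hgne1 : g - 1 ≠ 0 := by linarith
      field_simp
      ring
    rw [heq, inv_pow]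
    have hpow : (0 : ℝ) < (1 + 1 / (g - 1)) ^ G := by positivity
    calc ((1 + 1 / (g - 1)) ^ G)⁻¹ ≤ (2 : ℝ)⁻¹ := by
          apply inv_anti₀ (by norm_num) hkey
      _ = 1 / 2 := by norm_num

/-- `m^6 ≤ 2^m` for `m ≥ 64`. -/
lemma pa2 : ∀ m : ℕ, 64 ≤ m → m ^ 6 ≤ 2 ^ m := by
  intro m hm
  induction m, hm using Nat.le_induction with
  | base => norm_num
  | succ m hm ih =>
    have hm1 : 1 ≤ m := by omega
    have e1 : m ≤ m ^ 5 := Nat.le_self_pow (by norm_num) m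
    have e2 : m ^ 2 ≤ m ^ 5 := Nat.pow_le_pow_right hm1 (by norm_num)
    have e3 : m ^ 3 ≤ m ^ 5 := Nat.pow_le_pow_right hm1 (by norm_num)
    have e4 : m ^ 4 ≤ m ^ 5 := Nat.pow_le_pow_right hm1 (by norm_num)
    have e5 : 1 ≤ m ^ 5 := Nat.one_le_pow 5 m (by omega)
    have h64 : 64 * m ^ 5 ≤ m * m ^ 5 := Nat.mul_le_mul_right _ hm
    have h1 : (m + 1) ^ 6 ≤ 2 * m ^ 6 := by nlinarith [e1, e2, e3, e4, e5, h64]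
    calc (m + 1) ^ 6 ≤ 2 * m ^ 6 := h1
      _ ≤ 2 * 2 ^ m := by omega
      _ = 2 ^ (m + 1) := by ring

lemma chooseucb (G n m₀ c : ℕ) (hn1 : 1 ≤ n) (h : n ^ c ≤ G * (m₀ + 1 - c) ^ c) :
    n.choose c ≤ G * m₀.choose c := by
  have h4 := pa4 n m₀ c
  have h5 : n.choose c * n ^ c ≤ (G * m₀.choose c) * n ^ c := by
    calc n.choose c * n ^ c ≤ n.choose c * (G * (m₀ + 1 - c) ^ c) :=
          Nat.mul_le_mul_left _ h
      _ = G * (n.choose c * (m₀ + 1 - c) ^ c) := by ring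
      _ ≤ G * (m₀.choose c * n ^ c) := Nat.mul_le_mul_left _ h4
      _ = (G * m₀.choose c) * n ^ c := by ring
  exact Nat.le_of_mul_le_mul_right h5 (by positivity)

lemma logcube (K G n : ℕ) (hK1 : 1 ≤ K) (hG1 : 1 ≤ G) (hn64 : 2 ^ 64 ≤ n)
    (hnBIG : 8 * (125 * (K+1)^6 * G^3)^2 ≤ n) :
    (K * (K * (G * (2 * Nat.log 2 n + 2)) + 2*K + 1))^3 ≤ n := by
  set L : ℕ := Nat.log 2 n with hLdef
  have hn1 : 1 ≤ n := le_trans (by norm_num) hn64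
  have hL64 : 64 ≤ L + 3 := by
    have h1 : 64 ≤ L := by
      rw [hLdef]
      exact (Nat.le_log_iff_pow_le (by norm_num) (by omega)).2 hn64
    omega
  have hL6 : (L+3)^6 ≤ 8 * n := by
    calc (L+3)^6 ≤ 2^(L+3) := pa2 _ hL64
      _ = 8 * 2^L := by rw [pow_add]; ring
      _ ≤ 8 * n := Nat.mul_le_mul_left _ (Nat.pow_log_le_self 2 (by omega))
  have hxb : K * (K * (G * (2 * L + 2)) + 2*K + 1) ≤ 5*K^2*G*(L+3) := by
    have h1 : K * (K * (G * (2 * L + 2)) + 2*K + 1)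
        = 2*((K^2*G)*L) + 2*(K^2*G) + 2*K^2 + K := by ring
    have h2 : 5*K^2*G*(L+3) = 5*((K^2*G)*L) + 15*(K^2*G) := by ring
    have e1 : K^2 ≤ K^2*G := Nat.le_mul_of_pos_right _ (by omega)
    have e2 : K ≤ K^2 := by nlinarith [hK1]
    rw [h1, h2]
    linarith [e1, e2, Nat.zero_le ((K^2*G)*L)]
  have hsq : (K * (K * (G * (2 * L + 2)) + 2*K + 1))^6 ≤ (5*K^2*G)^6 * (8 * n) := by
    calc (K * (K * (G * (2 * L + 2)) + 2*K + 1))^6 ≤ (5*K^2*G*(L+3))^6 :=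
          Nat.pow_le_pow_left hxb _
      _ = (5*K^2*G)^6 * (L+3)^6 := by rw [mul_pow]
      _ ≤ (5*K^2*G)^6 * (8 * n) := Nat.mul_le_mul_left _ hL6
  have hcoef : (5*K^2*G)^6 * 8 ≤ n := by
    refine le_trans ?_ hnBIG
    have h2 : (5*K^2*G)^6 = 15625 * K^12 * G^6 := by ring
    have h3 : (125 * (K+1)^6 * G^3)^2 = 15625 * (K+1)^12 * G^6 := by ring
    have h4 : K^12 ≤ (K+1)^12 := Nat.pow_le_pow_left (by omega) _
    rw [h2, h3]
    nlinarith [Nat.zero_le (G^6)]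
  have hfin6 : ((K * (K * (G * (2 * L + 2)) + 2*K + 1))^3)^2 ≤ n^2 := by
    calc ((K * (K * (G * (2 * L + 2)) + 2*K + 1))^3)^2
        = (K * (K * (G * (2 * L + 2)) + 2*K + 1))^6 := by rw [← pow_mul]
      _ ≤ (5*K^2*G)^6 * (8 * n) := hsq
      _ = ((5*K^2*G)^6 * 8) * n := by ring
      _ ≤ n * n := Nat.mul_le_mul_right _ hcoef
      _ = n^2 := (sq n).symm
  exact (Nat.pow_le_pow_iff_left (by norm_num)).1 hfin6

lemma ngcount (G n : ℕ) (hG1 : 1 ≤ G) (hn1 : 1 ≤ n) {t : ℕ} (k : Fin t → ℕ)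
    (F : Fin t → Finset (Finset (Fin n))) (NG : Finset (Fin t))
    (hNG : ∀ i ∈ NG, n.choose (k i) ≤ G * (n.choose (k i) - (F i).card))
    (hFle : ∀ i : Fin t, (F i).card ≤ n.choose (k i))
    (hBpos : ∀ i : Fin t, 0 < n.choose (k i))
    (hGS : ∏ i ∈ NG, n.choose (k i) < (∏ i ∈ NG, (F i).card) * n ^ 2) :
    NG.card ≤ G * (2 * Nat.log 2 n + 2) := by
  by_contra hcon
  push_neg at hcon
  set L : ℕ := Nat.log 2 n with hLdef
  have hGposR : (0 : ℝ) < G := by exact_mod_cast hG1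
  have hbase0 : (0 : ℝ) ≤ 1 - 1/G := by
    have h1 : (1 : ℝ)/G ≤ 1 := by
      rw [div_le_one hGposR]; exact_mod_cast hG1
    linarith
  have hbase1 : (1 : ℝ) - 1/G ≤ 1 := by
    have h0 : (0:ℝ) ≤ 1/G := by positivity
    linarith
  have hprod : ∀ i ∈ NG, ((F i).card : ℝ) / (n.choose (k i)) ≤ 1 - 1/G := by
    intro i hi
    have hng := hNG i hi
    have hFB := hFle i
    have hBpos' : (0 : ℝ) < (n.choose (k i) : ℝ) := by exact_mod_cast hBpos i
    have hcast : ((n.choose (k i) : ℝ)) ≤ G * ((n.choose (k i) : ℝ) - (F i).card) := by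
      have h2 : ((n.choose (k i) - (F i).card : ℕ) : ℝ)
          = (n.choose (k i) : ℝ) - (F i).card := by
        rw [Nat.cast_sub hFB]
      calc ((n.choose (k i) : ℝ)) = ((n.choose (k i) : ℕ) : ℝ) := by norm_num
        _ ≤ ((G * (n.choose (k i) - (F i).card) : ℕ) : ℝ) := by exact_mod_cast hng
        _ = G * ((n.choose (k i) : ℝ) - (F i).card) := by rw [Nat.cast_mul, h2]
    rw [div_le_iff₀ hBpos']
    have hkey : (G:ℝ) * ((F i).card) ≤ G * (n.choose (k i)) - (n.choose (k i)) := by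
      nlinarith [hcast]
    have h9 : (1 - 1/(G:ℝ)) * (n.choose (k i)) * G = G * (n.choose (k i)) - (n.choose (k i)) := by
      field_simp
    have h10 : ((F i).card : ℝ) * G ≤ (1 - 1/(G:ℝ)) * (n.choose (k i)) * G := by
      rw [h9]
      linarith [hkey]
    exact le_of_mul_le_mul_right h10 hGposR
  have hlow : (1 : ℝ)/(n^2) < ∏ i ∈ NG, ((F i).card : ℝ)/(n.choose (k i)) := by
    have hBprodpos : (0 : ℝ) < ∏ i ∈ NG, (n.choose (k i) : ℝ) := by
      apply Finset.prod_pos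
      intro i _
      exact_mod_cast hBpos i
    have hnpos : (0 : ℝ) < (n : ℝ)^2 := by
      have : (0:ℝ) < (n:ℝ) := by exact_mod_cast hn1
      positivity
    rw [Finset.prod_div_distrib, lt_div_iff₀ hBprodpos, div_mul_eq_mul_div,
      div_lt_iff₀ hnpos]  -- may need adjusting
    have hcast : ((∏ i ∈ NG, n.choose (k i) : ℕ) : ℝ)
        < ((∏ i ∈ NG, (F i).card : ℕ) : ℝ) * ((n : ℝ))^2 := by exact_mod_cast hGS
    push_cast at hcast ⊢
    linarith [hcast]
  have hup : ∏ i ∈ NG, ((F i).card : ℝ)/(n.choose (k i)) ≤ (1 - 1/G)^(NG.card) := by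
    have h1 : ∏ i ∈ NG, ((F i).card:ℝ)/(n.choose (k i)) ≤ ∏ _i ∈ NG, (1 - 1/(G:ℝ)) :=
      Finset.prod_le_prod (fun i _ => by positivity) hprod
    rwa [Finset.prod_const] at h1
  have hmid : ((1 : ℝ) - 1/G)^(NG.card) ≤ (1 - 1/G)^(G * (2*L+2)) :=
    pow_le_pow_of_le_one hbase0 hbase1 (le_of_lt hcon)
  have hsplitpow : ((1 : ℝ) - 1/G)^(G * (2*L+2)) = (((1 - 1/G)^G))^(2*L+2) := by
    rw [← pow_mul]
  have h12 := pa1 G hG1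
  have hhalf : (((1 : ℝ) - 1/G)^G)^(2*L+2) ≤ ((1:ℝ)/2)^(2*L+2) :=
    pow_le_pow_left₀ (by positivity) h12 _
  have hfin : ((1:ℝ)/2)^(2*L+2) < 1/(n^2) := by
    have hlt : n^2 < 2^(2*L+2) := by
      have h1 : n < 2^(L+1) := Nat.lt_pow_succ_log_self (by norm_num) n
      calc n^2 < (2^(L+1))^2 := Nat.pow_lt_pow_left h1 (by norm_num)
        _ = 2^(2*L+2) := by rw [← pow_mul]; ring_nf
    have hltR : ((n : ℝ))^2 < (2 : ℝ)^(2*L+2) := by exact_mod_cast hlt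
    have hnposR : (0:ℝ) < (n:ℝ)^2 := by
      have : (0:ℝ) < (n:ℝ) := by exact_mod_cast hn1
      positivity
    rw [div_pow, one_pow, div_lt_div_iff₀ (by positivity) hnposR]
    linarith
  linarith [hlow, hup, hmid, le_of_eq hsplitpow, hhalf, hfin,
    le_trans hup (le_trans hmid (le_of_eq hsplitpow))]

end RMP

open Finset RMP

set_option maxHeartbeats 4000000 in
/-- Lemma 3.3: product-type condition for rainbow matchings when
`k₁ + ⋯ + k_t ≤ n(1-ε)` and `n` is sufficiently large (depending on `k₁ = K` and `ε`). -/
theorem rainbow_matching_product_eps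
    (K : ℕ) (ε : ℝ) (hε0 : 0 < ε) (hε1 : ε < 1) :
    ∃ N : ℕ, ∀ n ≥ N, ∀ t : ℕ, ∀ ht : 2 ≤ t, ∀ k : Fin t → ℕ,
      k ⟨0, by omega⟩ = K →
      (∀ i j : Fin t, i ≤ j → k j ≤ k i) →
      (∀ i, 1 ≤ k i) →
      ((∑ i : Fin t, (k i : ℝ)) ≤ n * (1 - ε)) →
      ∀ F : Fin t → Finset (Finset (Fin n)),
      (∀ i, ∀ e ∈ F i, e.card = k i) →
      (t = 2 →
        (F ⟨0, by omega⟩).card * (F ⟨1, by omega⟩).card >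
          (n - 1).choose (k ⟨0, by omega⟩ - 1) * (n - 1).choose (k ⟨1, by omega⟩ - 1)) →
      (3 ≤ t →
        ∏ i : Fin t, (F i).card >
          (n - 1).choose (k ⟨0, by omega⟩ - 1) * (n - 1).choose (k ⟨1, by omega⟩ - 1) *
            ∏ i ∈ Finset.univ.filter (fun i : Fin t => 2 ≤ i.val), n.choose (k i)) →
      ∃ e : Fin t → Finset (Fin n), (∀ i, e i ∈ F i) ∧
        ∀ i j, i ≠ j → Disjoint (e i) (e j) := by
  classical
  set E : ℕ := ⌈1/ε⌉₊ + 1 with hEdef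
  set G : ℕ := 2 * (E + 1) ^ K + 1 with hGdef
  refine ⟨2 ^ 64 + (8 * (125 * (K+1)^6 * G^3)^2 + (8 * (K+1)^6 +
    (E * (E+1) * (K+1) + (K+1)))), ?_⟩
  intro n hn t ht k hk0 hmono hk1 hsum F hunif hyp2 hyp3
  -- basic size facts about n
  have hn64 : 2 ^ 64 ≤ n := le_trans (by linarith [Nat.zero_le (8 * (125 * (K+1)^6 * G^3)^2 +
    (8 * (K+1)^6 + (E * (E+1) * (K+1) + (K+1))))]) hn
  have hnBIG : 8 * (125 * (K+1)^6 * G^3)^2 ≤ n := by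
    refine le_trans ?_ hn
    linarith [Nat.zero_le (2^64), Nat.zero_le (8 * (K+1)^6 + (E * (E+1) * (K+1) + (K+1)))]
  have hnK6 : 8 * (K+1)^6 ≤ n := by
    refine le_trans ?_ hn
    linarith [Nat.zero_le (2^64), Nat.zero_le (8 * (125 * (K+1)^6 * G^3)^2),
      Nat.zero_le (E * (E+1) * (K+1) + (K+1))]
  have hnE : E * (E+1) * (K+1) ≤ n := by
    refine le_trans ?_ hn
    linarith [Nat.zero_le (2^64), Nat.zero_le (8 * (125 * (K+1)^6 * G^3)^2),
      Nat.zero_le (8 * (K+1)^6), Nat.zero_le (K+1)]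
  have hnK : K + 1 ≤ n := by
    refine le_trans ?_ hn
    linarith [Nat.zero_le (2^64), Nat.zero_le (8 * (125 * (K+1)^6 * G^3)^2),
      Nat.zero_le (8 * (K+1)^6), Nat.zero_le (E * (E+1) * (K+1))]
  have hn1 : 1 ≤ n := by omega
  -- index 0 and 1
  have h01 : (0 : ℕ) < t := by omega
  have h11 : (1 : ℕ) < t := by omega
  set idx0 : Fin t := ⟨0, h01⟩ with hidx0
  set idx1 : Fin t := ⟨1, h11⟩ with hidx1
  have hidxne : idx0 ≠ idx1 := by
    intro h
    have := congrArg Fin.val h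
    simp [hidx0, hidx1] at this
  have hkK : ∀ i, k i ≤ K := by
    intro i
    have := hmono idx0 i (by simp [Fin.le_def, hidx0])
    rwa [hk0] at this
  have hK1 : 1 ≤ K := by rw [← hk0]; exact hk1 idx0
  have hk1le : ∀ i, i ≠ idx0 → k i ≤ k idx1 := by
    intro i hi
    refine hmono idx1 i ?_
    simp only [Fin.le_def, hidx1]
    rcases Nat.eq_zero_or_pos i.val with h | h
    · exact absurd (Fin.ext h : i = idx0) hi
    · omega
  have hFsub : ∀ i, F i ⊆ (univ : Finset (Fin n)).powersetCard (k i) := by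
    intro i f hf
    exact mem_powersetCard.2 ⟨subset_univ f, hunif i f hf⟩
  have hkn : ∀ i, k i ≤ n := fun i => le_trans (hkK i) (by omega)
  have hBpos : ∀ i, 0 < n.choose (k i) := fun i => Nat.choose_pos (hkn i)
  have hcardV : (univ : Finset (Fin n)).card = n := by simp
  -- dispatch on t
  rcases Nat.lt_or_ge t 3 with ht2 | ht3
  · -- t = 2
    have ht2' : t = 2 := by omega
    have hcond := hyp2 ht2'
    have hmax : 8 * (max (k idx0) (k idx1)) ^ 6 ≤ (univ : Finset (Fin n)).card := by
      rw [hcardV]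
      refine le_trans ?_ hnK6
      have h1 : max (k idx0) (k idx1) ≤ K + 1 := by
        have := hkK idx0; have := hkK idx1
        omega
      calc 8 * (max (k idx0) (k idx1)) ^ 6 ≤ 8 * (K+1)^6 := by
            exact Nat.mul_le_mul_left _ (Nat.pow_le_pow_left h1 6)
        _ ≤ 8 * (K+1)^6 := le_rfl
    obtain ⟨e0, he0, e1, he1, hd⟩ := cross2 (univ : Finset (Fin n)) (k idx0) (k idx1)
      (hk1 idx0) (hk1 idx1) hmax (F idx0) (F idx1) (hFsub idx0) (hFsub idx1)
      (by rw [hcardV]; exact hcond)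
    refine ⟨fun i => if i = idx0 then e0 else e1, ?_, ?_⟩
    · intro i
      by_cases hi : i = idx0
      · simp [hi, he0]
      · have : i = idx1 := by
          apply Fin.ext
          have hiv := i.isLt
          have h0 : i.val ≠ 0 := fun h => hi (Fin.ext h)
          simp [hidx1]; omega
        subst this
        simp only [if_neg (fun h => hidxne (Eq.symm h))]
        exact he1
    · intro i j hij
      by_cases hi : i = idx0 <;> by_cases hj : j = idx0
      · exact absurd (hi.trans hj.symm) hij
      · simp [hi, hj, hd]
      · simp [hi, hj, hd.symm]
      · have hi1 : i = idx1 := by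
          apply Fin.ext
          have h0 : i.val ≠ 0 := fun h => hi (Fin.ext h)
          have := i.isLt; simp only [hidx1]; omega
        have hj1 : j = idx1 := by
          apply Fin.ext
          have h0 : j.val ≠ 0 := fun h => hj (Fin.ext h)
          have := j.isLt; simp only [hidx1]; omega
        exact absurd (hi1.trans hj1.symm) hij
  · -- t ≥ 3
    have hyp3' := hyp3 ht3
    have hidx1ne : ∀ i : Fin t, i ≠ idx0 → 1 ≤ i.val := by
      intro i hi
      rcases Nat.eq_zero_or_pos i.val with h | h
      · exact absurd (Fin.ext h : i = idx0) hi
      · exact h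
    have hFpos : ∀ i, 0 < (F i).card := by
      intro i
      rcases Nat.eq_zero_or_pos (F i).card with h | h
      · exfalso
        have hz : ∏ j : Fin t, (F j).card = 0 := Finset.prod_eq_zero (mem_univ i) h
        rw [hz] at hyp3'
        exact Nat.not_lt_zero _ hyp3'
      · exact h
    have hFle : ∀ i, (F i).card ≤ n.choose (k i) := by
      intro i
      have h := card_le_card (hFsub i)
      rwa [card_powersetCard, hcardV] at h
    -- splitting a product over `univ` into indices 0, 1 and the rest
    have hsplit : ∀ f : Fin t → ℕ, ∏ i, f i
        = f idx0 * f idx1 * ∏ i ∈ univ.filter (fun i : Fin t => 2 ≤ i.val), f i := by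
      intro f
      have h1 : (univ.filter (fun i : Fin t => ¬ 2 ≤ i.val)) = {idx0, idx1} := by
        ext i
        simp only [mem_filter, mem_univ, true_and, mem_insert, mem_singleton, not_le]
        constructor
        · intro h
          have h' : i.val = 0 ∨ i.val = 1 := by omega
          rcases h' with h' | h'
          · exact Or.inl (Fin.ext h')
          · exact Or.inr (Fin.ext h')
        · rintro (rfl | rfl) <;> simp [hidx0, hidx1]
      calc ∏ i, f i
          = (∏ i ∈ univ.filter (fun i : Fin t => 2 ≤ i.val), f i)
            * ∏ i ∈ univ.filter (fun i : Fin t => ¬ 2 ≤ i.val), f i :=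
            (prod_filter_mul_prod_filter_not univ _ f).symm
        _ = (∏ i ∈ univ.filter (fun i : Fin t => 2 ≤ i.val), f i) * (f idx0 * f idx1) := by
            rw [h1, prod_pair hidxne]
        _ = f idx0 * f idx1 * ∏ i ∈ univ.filter (fun i : Fin t => 2 ≤ i.val), f i := by ring
    -- the master subset product inequality
    have GSUB : ∀ S : Finset (Fin t),
        k idx0 * k idx1 * ∏ i ∈ S, n.choose (k i) < (∏ i ∈ S, (F i).card) * n ^ 2 := by
      intro S
      have hcomp : (∏ i ∈ univ \ S, (F i).card) * (∏ i ∈ S, (F i).card) = ∏ i, (F i).card :=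
        prod_sdiff (subset_univ S)
      have hcompB : (∏ i ∈ univ \ S, n.choose (k i)) * (∏ i ∈ S, n.choose (k i))
          = ∏ i, n.choose (k i) := prod_sdiff (subset_univ S)
      have hle : ∏ i, (F i).card
          ≤ (∏ i ∈ univ \ S, n.choose (k i)) * (∏ i ∈ S, (F i).card) := by
        rw [← hcomp]
        exact Nat.mul_le_mul_right _ (Finset.prod_le_prod' (fun i _ => hFle i))
      have hid0 : n * (n-1).choose (k idx0 - 1) = k idx0 * n.choose (k idx0) :=
        pa5 n (k idx0) (hk1 idx0) hn1
      have hid1 : n * (n-1).choose (k idx1 - 1) = k idx1 * n.choose (k idx1) :=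
        pa5 n (k idx1) (hk1 idx1) hn1
      have hident : n^2 * ((n-1).choose (k idx0 - 1) * (n-1).choose (k idx1 - 1)
            * ∏ i ∈ univ.filter (fun i : Fin t => 2 ≤ i.val), n.choose (k i))
          = k idx0 * k idx1 * ∏ i, n.choose (k i) := by
        rw [hsplit (fun i => n.choose (k i))]
        calc n^2 * ((n-1).choose (k idx0 - 1) * (n-1).choose (k idx1 - 1)
              * ∏ i ∈ univ.filter (fun i : Fin t => 2 ≤ i.val), n.choose (k i))
            = (n * (n-1).choose (k idx0 - 1)) * ((n * (n-1).choose (k idx1 - 1))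
              * ∏ i ∈ univ.filter (fun i : Fin t => 2 ≤ i.val), n.choose (k i)) := by ring
          _ = (k idx0 * n.choose (k idx0)) * ((k idx1 * n.choose (k idx1))
              * ∏ i ∈ univ.filter (fun i : Fin t => 2 ≤ i.val), n.choose (k i)) := by
              rw [hid0, hid1]
          _ = k idx0 * k idx1 * (n.choose (k idx0) * n.choose (k idx1)
              * ∏ i ∈ univ.filter (fun i : Fin t => 2 ≤ i.val), n.choose (k i)) := by ring
      have hstrict : k idx0 * k idx1 * ∏ i, n.choose (k i) < n^2 * ∏ i, (F i).card := by
        rw [← hident]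
        exact mul_lt_mul_of_pos_left hyp3' (by positivity)
      have hfin : (∏ i ∈ univ \ S, n.choose (k i))
            * (k idx0 * k idx1 * ∏ i ∈ S, n.choose (k i))
          < (∏ i ∈ univ \ S, n.choose (k i)) * ((∏ i ∈ S, (F i).card) * n ^ 2) := by
        calc (∏ i ∈ univ \ S, n.choose (k i)) * (k idx0 * k idx1 * ∏ i ∈ S, n.choose (k i))
            = k idx0 * k idx1 * ((∏ i ∈ univ \ S, n.choose (k i)) * ∏ i ∈ S, n.choose (k i)) := by
              ring
          _ = k idx0 * k idx1 * ∏ i, n.choose (k i) := by rw [hcompB]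
          _ < n ^ 2 * ∏ i, (F i).card := hstrict
          _ ≤ n ^ 2 * ((∏ i ∈ univ \ S, n.choose (k i)) * (∏ i ∈ S, (F i).card)) :=
              Nat.mul_le_mul_left _ hle
          _ = (∏ i ∈ univ \ S, n.choose (k i)) * ((∏ i ∈ S, (F i).card) * n ^ 2) := by ring
      exact Nat.lt_of_mul_lt_mul_left hfin
    -- any pair of distinct families beats the two-star product
    have pairCross : ∀ a b : Fin t, a ≠ b →
        (n-1).choose (k a - 1) * (n-1).choose (k b - 1) < (F a).card * (F b).card := by
      intro a b hab
      have hkab : k a * k b ≤ k idx0 * k idx1 := by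
        by_cases hb : b = idx0
        · have ha0 : a ≠ idx0 := by rw [hb] at hab; exact hab
          have h1 : k a ≤ k idx1 := hk1le a ha0
          have h2 : k b ≤ k idx0 := hk0 ▸ hkK b
          calc k a * k b ≤ k idx1 * k idx0 := Nat.mul_le_mul h1 h2
            _ = k idx0 * k idx1 := mul_comm _ _
        · have h1 : k a ≤ k idx0 := hk0 ▸ hkK a
          have h2 : k b ≤ k idx1 := hk1le b hb
          exact Nat.mul_le_mul h1 h2
      have hG := GSUB {a, b}
      rw [prod_pair hab, prod_pair hab] at hG
      have hida : n * (n-1).choose (k a - 1) = k a * n.choose (k a) :=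
        pa5 n (k a) (hk1 a) hn1
      have hidb : n * (n-1).choose (k b - 1) = k b * n.choose (k b) :=
        pa5 n (k b) (hk1 b) hn1
      have hchain : ((n-1).choose (k a - 1) * (n-1).choose (k b - 1)) * n^2
          < ((F a).card * (F b).card) * n^2 := by
        calc ((n-1).choose (k a - 1) * (n-1).choose (k b - 1)) * n^2
            = (n * (n-1).choose (k a - 1)) * (n * (n-1).choose (k b - 1)) := by ring
          _ = (k a * n.choose (k a)) * (k b * n.choose (k b)) := by rw [hida, hidb]
          _ = (k a * k b) * (n.choose (k a) * n.choose (k b)) := by ring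
          _ ≤ (k idx0 * k idx1) * (n.choose (k a) * n.choose (k b)) :=
              Nat.mul_le_mul_right _ hkab
          _ < ((F a).card * (F b).card) * n^2 := hG
      exact Nat.lt_of_mul_lt_mul_right hchain
    -- supersparse families
    set ssparse : Fin t → Prop := fun i => (F i).card ^ 3 * n ^ 2 < (n.choose (k i)) ^ 3
      with hssdef
    set T1 : Finset (Fin t) := univ.filter ssparse with hT1def
    have hT1card : T1.card ≤ 2 := by
      by_contra hcon
      push_neg at hcon
      obtain ⟨S₂, hS₂sub, hS₂card⟩ := Finset.exists_subset_card_eq (by omega : 3 ≤ T1.card)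
      have hS₂ne : S₂.Nonempty := by
        rw [← Finset.card_pos, hS₂card]; norm_num
      have hlt : ∏ i ∈ S₂, ((F i).card ^ 3 * n ^ 2) < ∏ i ∈ S₂, (n.choose (k i)) ^ 3 := by
        apply Finset.prod_lt_prod_of_nonempty _ _ hS₂ne
        · intro i _
          have := hFpos i
          positivity
        · intro i hi
          have hiT1 := hS₂sub hi
          rw [hT1def, mem_filter] at hiT1
          exact hiT1.2
      have hL : ∏ i ∈ S₂, ((F i).card ^ 3 * n ^ 2)
          = (∏ i ∈ S₂, (F i).card) ^ 3 * (n ^ 2) ^ 3 := by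
        rw [Finset.prod_mul_distrib, Finset.prod_pow, Finset.prod_const, hS₂card]
      have hR : ∏ i ∈ S₂, (n.choose (k i)) ^ 3 = (∏ i ∈ S₂, n.choose (k i)) ^ 3 := by
        rw [Finset.prod_pow]
      have hG := GSUB S₂
      have hG' : ∏ i ∈ S₂, n.choose (k i) < (∏ i ∈ S₂, (F i).card) * n ^ 2 := by
        have hk01 : 1 ≤ k idx0 * k idx1 :=
          Nat.one_le_iff_ne_zero.2 (Nat.mul_ne_zero (by have := hk1 idx0; omega)
            (by have := hk1 idx1; omega))
        calc ∏ i ∈ S₂, n.choose (k i)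
            = 1 * ∏ i ∈ S₂, n.choose (k i) := (one_mul _).symm
          _ ≤ k idx0 * k idx1 * ∏ i ∈ S₂, n.choose (k i) := Nat.mul_le_mul_right _ hk01
          _ < (∏ i ∈ S₂, (F i).card) * n ^ 2 := hG
      have hcube : (∏ i ∈ S₂, n.choose (k i)) ^ 3 < ((∏ i ∈ S₂, (F i).card) * n ^ 2) ^ 3 :=
        Nat.pow_lt_pow_left hG' (by norm_num)
      rw [hL, hR] at hlt
      have : ((∏ i ∈ S₂, (F i).card) * n ^ 2) ^ 3
          = (∏ i ∈ S₂, (F i).card) ^ 3 * (n ^ 2) ^ 3 := by ring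
      omega
    -- good families and the count of nongood families
    set good : Fin t → Prop := fun i => G * (n.choose (k i) - (F i).card) < n.choose (k i)
      with hgooddef
    set L : ℕ := Nat.log 2 n with hLdef
    set Mstar : ℕ := G * (2 * L + 2) with hMdef
    have hE1 : 1 ≤ E := by rw [hEdef]; omega
    have hG1 : 1 ≤ G := by rw [hGdef]; omega
    have hNGcard : (univ.filter (fun i => ¬ good i)).card ≤ Mstar := by
      rw [hMdef, hLdef]
      apply ngcount G n hG1 hn1 k F
      · intro i hi
        rw [mem_filter] at hi
        exact not_lt.1 hi.2
      · exact hFle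
      · exact hBpos
      · have hG := GSUB (univ.filter (fun i => ¬ good i))
        have hk01 : 1 ≤ k idx0 * k idx1 :=
          Nat.one_le_iff_ne_zero.2 (Nat.mul_ne_zero (by have := hk1 idx0; omega)
            (by have := hk1 idx1; omega))
        calc ∏ i ∈ univ.filter (fun i => ¬ good i), n.choose (k i)
            = 1 * ∏ i ∈ univ.filter (fun i => ¬ good i), n.choose (k i) := (one_mul _).symm
          _ ≤ k idx0 * k idx1 * ∏ i ∈ univ.filter (fun i => ¬ good i), n.choose (k i) :=
              Nat.mul_le_mul_right _ hk01
          _ < _ := hG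
    -- total size of the k's and the reserve m₀
    set sk : ℕ := ∑ i, k i with hskdef
    have hskle : (sk : ℝ) ≤ n * (1 - ε) := by
      rw [hskdef]
      push_cast
      exact hsum
    have hskn : sk ≤ n := by
      have h1 : (sk : ℝ) ≤ n := by
        have hn0 : (0:ℝ) ≤ (n:ℝ) := by positivity
        nlinarith [hskle, hε0, hε1]
      exact_mod_cast h1
    set m₀ : ℕ := n - sk with hm₀def
    have hm₀R : ε * n ≤ (m₀ : ℝ) := by
      have h1 : (m₀:ℝ) = (n:ℝ) - sk := by
        rw [hm₀def, Nat.cast_sub hskn]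
      nlinarith [hskle]
    have hEε : (1:ℝ)/ε ≤ E := by
      rw [hEdef]
      push_cast
      have := Nat.le_ceil ((1:ℝ)/ε)
      linarith
    have hEm₀ : n ≤ E * m₀ := by
      have hE0 : (0:ℝ) < (E:ℝ) := by exact_mod_cast hE1
      have h1 : (n : ℝ) ≤ E * m₀ := by
        have h2 : (1/ε) * (ε * n) ≤ (E:ℝ) * m₀ := by
          apply mul_le_mul hEε hm₀R (by positivity) (le_of_lt hE0)
        have h3 : (1/ε) * (ε * (n:ℝ)) = n := by field_simp
        linarith
      exact_mod_cast h1
    have hm₀EK : (E+1) * K ≤ m₀ := by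
      have h1 : E * ((E+1)*K) ≤ E * m₀ := by
        refine le_trans ?_ hEm₀
        refine le_trans ?_ hnE
        calc E * ((E+1)*K) = E * (E+1) * K := by ring
          _ ≤ E * (E+1) * (K+1) := Nat.mul_le_mul_left _ (by omega)
      exact Nat.le_of_mul_le_mul_left h1 (by omega)
    have hKm₀ : K ≤ m₀ := by
      calc K = 1 * K := (one_mul K).symm
        _ ≤ (E+1) * K := Nat.mul_le_mul_right _ (by omega)
        _ ≤ m₀ := hm₀EK
    -- goods bound: a good family beats everything outside the reserve
    have goodsBound : ∀ i, good i → n.choose (k i) < (F i).card + m₀.choose (k i) := by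
      intro i hgi
      have hkm₀ : k i ≤ m₀ := le_trans (hkK i) hKm₀
      have hGm : n.choose (k i) ≤ G * m₀.choose (k i) := by
        apply chooseucb G n m₀ (k i) hn1
        have hish : n ≤ (E+1) * (m₀ + 1 - k i) := by
          have hki := hkK i
          have h3 : E * m₀ ≤ E * ((m₀ + 1 - k i) + K) := Nat.mul_le_mul_left _ (by omega)
          have h4 : E * ((m₀ + 1 - k i) + K) = E * (m₀ + 1 - k i) + E * K := by ring
          have h5 : E * K + 1 ≤ m₀ + 1 - k i := by
            have := hm₀EK
            have h6 : (E+1)*K = E*K + K := by ring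
            omega
          have h7 : (E+1) * (m₀ + 1 - k i) = E * (m₀ + 1 - k i) + (m₀ + 1 - k i) := by ring
          omega
        have hEkG : (E+1)^(k i) ≤ G := by
          rw [hGdef]
          have h1 : (E+1)^(k i) ≤ (E+1)^K := Nat.pow_le_pow_right (by omega) (hkK i)
          omega
        calc n^(k i) ≤ ((E+1) * (m₀ + 1 - k i))^(k i) := Nat.pow_le_pow_left hish _
          _ = (E+1)^(k i) * (m₀ + 1 - k i)^(k i) := mul_pow _ _ _
          _ ≤ G * (m₀ + 1 - k i)^(k i) := Nat.mul_le_mul_right _ hEkG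
      have hgd : G * (n.choose (k i) - (F i).card) < n.choose (k i) := hgi
      have hFleB := hFle i
      have h6 : n.choose (k i) - (F i).card < m₀.choose (k i) :=
        Nat.lt_of_mul_lt_mul_left (lt_of_lt_of_le hgd hGm)
      omega
    -- the key largeness bound for nongood, non-supersparse families
    have hNB : (K * (K * Mstar + 2*K + 1))^3 ≤ n := by
      rw [hMdef, hLdef]
      exact logcube K G n hK1 hG1 hn64 hnBIG
    have nongoodBound : ∀ i, ¬ ssparse i →
        (K * Mstar + 2*K + 1) * (k i) * n.choose (k i) ≤ (F i).card * n := by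
      intro i hsi
      rw [hssdef] at hsi
      have hsi' : n.choose (k i) ^ 3 ≤ (F i).card ^ 3 * n ^ 2 := not_lt.1 hsi
      set W : ℕ := K * Mstar + 2*K + 1 with hWdef
      have hcube : (W * (k i) * n.choose (k i))^3 ≤ ((F i).card * n)^3 := by
        calc (W * (k i) * n.choose (k i))^3
            = W^3 * (k i)^3 * (n.choose (k i))^3 := by ring
          _ ≤ W^3 * K^3 * (n.choose (k i))^3 := by
              exact Nat.mul_le_mul_right _ (Nat.mul_le_mul_left _
                (Nat.pow_le_pow_left (hkK i) 3))
          _ = (K * W)^3 * (n.choose (k i))^3 := by ring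
          _ ≤ n * (n.choose (k i))^3 := Nat.mul_le_mul_right _ hNB
          _ ≤ n * ((F i).card ^3 * n^2) := Nat.mul_le_mul_left _ hsi'
          _ = ((F i).card * n)^3 := by ring
      exact (Nat.pow_le_pow_iff_left (by norm_num : (3:ℕ) ≠ 0)).1 hcube
    -- disjoint pair extraction for any two distinct families
    have pairEdge : ∀ a b : Fin t, a ≠ b →
        ∃ ea eb, ea ∈ F a ∧ eb ∈ F b ∧ Disjoint ea eb := by
      intro a b hab
      have hmax : 8 * (max (k a) (k b)) ^ 6 ≤ (univ : Finset (Fin n)).card := by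
        rw [hcardV]
        refine le_trans ?_ hnK6
        have h1 : max (k a) (k b) ≤ K + 1 := by
          have := hkK a; have := hkK b; omega
        exact Nat.mul_le_mul_left _ (Nat.pow_le_pow_left h1 6)
      obtain ⟨ea, hea, eb, heb, hd⟩ := cross2 (univ : Finset (Fin n)) (k a) (k b)
        (hk1 a) (hk1 b) hmax (F a) (F b) (hFsub a) (hFsub b)
        (by rw [hcardV]; exact pairCross a b hab)
      exact ⟨ea, eb, hea, heb, hd⟩
    -- match up the supersparse families (at most two of them)
    have hM₁ : ∃ (M₁ : Finset (Fin t)) (eP : Fin t → Finset (Fin n)),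
        T1 ⊆ M₁ ∧ M₁.card ≤ 2 ∧ (∀ i ∈ M₁, eP i ∈ F i) ∧
        (∀ i ∈ M₁, ∀ j ∈ M₁, i ≠ j → Disjoint (eP i) (eP j)) := by
      have hc012 : T1.card = 0 ∨ T1.card = 1 ∨ T1.card = 2 := by omega
      rcases hc012 with h | h | h
      · refine ⟨∅, fun _ => ∅, ?_, by simp, by simp, by simp⟩
        rw [Finset.card_eq_zero] at h
        rw [h]
      · obtain ⟨a, ha⟩ := Finset.card_eq_one.1 h
        have hqa : (if a = idx0 then idx1 else idx0) ≠ a := by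
          by_cases h' : a = idx0
          · rw [if_pos h', h']; exact fun hh => hidxne hh.symm
          · rw [if_neg h']; exact fun hh => h' hh.symm
        set q := if a = idx0 then idx1 else idx0 with hqdef
        obtain ⟨ea, eb, hea, heb, hd⟩ := pairEdge a q (Ne.symm hqa)
        refine ⟨{a, q}, fun i => if i = a then ea else eb, ?_, ?_, ?_, ?_⟩
        · rw [ha]
          exact Finset.singleton_subset_iff.2 (mem_insert_self a _)
        · exact le_trans (card_insert_le _ _) (by simp)
        · intro i hi
          rcases mem_insert.1 hi with rfl | hi'
          · beta_reduce; rw [if_pos rfl]; exact hea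
          · beta_reduce; rw [mem_singleton.1 hi', if_neg hqa]; exact heb
        · intro i hi j hj hij
          rcases mem_insert.1 hi with rfl | hi' <;> rcases mem_insert.1 hj with rfl | hj'
          · exact absurd rfl hij
          · beta_reduce; rw [mem_singleton.1 hj', if_pos rfl, if_neg hqa]; exact hd
          · beta_reduce; rw [mem_singleton.1 hi', if_pos rfl, if_neg hqa]; exact hd.symm
          · rw [mem_singleton.1 hi', mem_singleton.1 hj'] at hij
            exact absurd rfl hij
      · obtain ⟨a, b, hab, hT⟩ := Finset.card_eq_two.1 h
        obtain ⟨ea, eb, hea, heb, hd⟩ := pairEdge a b hab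
        refine ⟨{a, b}, fun i => if i = a then ea else eb, ?_, ?_, ?_, ?_⟩
        · rw [hT]
        · exact le_trans (card_insert_le _ _) (by simp)
        · intro i hi
          rcases mem_insert.1 hi with rfl | hi'
          · beta_reduce; rw [if_pos rfl]; exact hea
          · beta_reduce; rw [mem_singleton.1 hi', if_neg (Ne.symm hab)]; exact heb
        · intro i hi j hj hij
          rcases mem_insert.1 hi with rfl | hi' <;> rcases mem_insert.1 hj with rfl | hj'
          · exact absurd rfl hij
          · beta_reduce; rw [mem_singleton.1 hj', if_pos rfl, if_neg (Ne.symm hab)]; exact hd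
          · beta_reduce; rw [mem_singleton.1 hi', if_pos rfl, if_neg (Ne.symm hab)]; exact hd.symm
          · rw [mem_singleton.1 hi', mem_singleton.1 hj'] at hij
            exact absurd rfl hij
    obtain ⟨M₁, eP, hT1M, hM₁card, hPmem, hPdisj⟩ := hM₁
    -- the used-up vertex set
    set U₁ : Finset (Fin n) := M₁.biUnion eP with hU₁def
    have hU₁sum : U₁.card ≤ ∑ i ∈ M₁, k i := by
      calc U₁.card ≤ ∑ i ∈ M₁, (eP i).card := card_biUnion_le
        _ ≤ ∑ i ∈ M₁, k i := Finset.sum_le_sum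
            (fun i hi => le_of_eq (hunif i _ (hPmem i hi)))
    have hU₁card : U₁.card ≤ 2 * K := by
      refine le_trans hU₁sum ?_
      calc ∑ i ∈ M₁, k i ≤ ∑ _i ∈ M₁, K := Finset.sum_le_sum (fun i _ => hkK i)
        _ = M₁.card * K := by rw [Finset.sum_const, smul_eq_mul]
        _ ≤ 2 * K := Nat.mul_le_mul_right _ hM₁card
    set V₁ : Finset (Fin n) := univ \ U₁ with hV₁def
    have hV₁card : V₁.card = n - U₁.card := by
      rw [hV₁def, card_sdiff_of_subset (subset_univ _), hcardV]
    set fam : Fin t → Finset (Finset (Fin n)) :=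
      fun i => (F i).filter (fun f => Disjoint f U₁) with hfamdef
    have hfamsub : ∀ i, fam i ⊆ V₁.powersetCard (k i) := by
      intro i
      rw [hfamdef, hV₁def]
      exact restrict_powersetCard univ (k i) (F i) (hFsub i) U₁
    have hfamloss : ∀ i, (F i).card ≤ (fam i).card
        + (n.choose (k i) - V₁.card.choose (k i)) := by
      intro i
      have h := card_le_add_restrict univ (k i) (F i) (hFsub i) U₁
      rw [hcardV, ← hV₁def] at h
      exact h
    have hfamF : ∀ i, fam i ⊆ F i := by
      intro i
      rw [hfamdef]
      exact filter_subset _ _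
    -- greedy lists
    set gl1 : List (Fin t) := (univ.filter (fun i => i ∉ M₁ ∧ ¬ good i)).toList with hgl1def
    set gl2 : List (Fin t) := (univ.filter (fun i => i ∉ M₁ ∧ good i)).toList with hgl2def
    set glist : List (Fin t) := gl1 ++ gl2 with hglistdef
    have hnd1 : gl1.Nodup := Finset.nodup_toList _
    have hnd2 : gl2.Nodup := Finset.nodup_toList _
    have hglnd : glist.Nodup := by
      rw [hglistdef]
      refine List.Nodup.append hnd1 hnd2 ?_
      intro i h1 h2
      rw [hgl1def, Finset.mem_toList, mem_filter] at h1
      rw [hgl2def, Finset.mem_toList, mem_filter] at h2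
      exact h1.2.2 h2.2.2
    have hglmem : ∀ i : Fin t, i ∉ M₁ → i ∈ glist := by
      intro i hi
      rw [hglistdef, List.mem_append, hgl1def, hgl2def, Finset.mem_toList,
        Finset.mem_toList, mem_filter, mem_filter]
      by_cases hg : good i
      · exact Or.inr ⟨mem_univ i, hi, hg⟩
      · exact Or.inl ⟨mem_univ i, hi, hg⟩
    have hglel : ∀ i ∈ glist, i ∉ M₁ := by
      intro i hi
      rw [hglistdef, List.mem_append, hgl1def, hgl2def, Finset.mem_toList,
        Finset.mem_toList, mem_filter, mem_filter] at hi
      rcases hi with h | h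
      · exact h.2.1
      · exact h.2.1
    -- the prefix conditions for the greedy chain
    have hcondG : ∀ (l₁ l₂ : List (Fin t)) (i : Fin t), glist = l₁ ++ i :: l₂ →
        V₁.card.choose (k i) < (fam i).card
          + (V₁.card - (l₁.map k).sum).choose (k i) := by
      intro l₁ l₂ i hsplit
      have higlist : i ∈ glist := by
        rw [hsplit]
        exact List.mem_append_right _ (List.mem_cons_self)
      have hiM₁ : i ∉ M₁ := hglel i higlist
      have hl₁nd' : (l₁ ++ i :: l₂).Nodup := hsplit ▸ hglnd
      have hl₁parts := List.nodup_append.1 hl₁nd'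
      have hil₁ : i ∉ l₁ := fun hmem =>
        (hl₁parts.2.2 i hmem i List.mem_cons_self) rfl
      have hl₁ndup : l₁.Nodup := hl₁parts.1
      have hl₁glist : ∀ j ∈ l₁, j ∈ glist := by
        intro j hj
        rw [hsplit]
        exact List.mem_append_left _ hj
      -- two routes depending on whether i is good
      have goodRoute : good i → V₁.card.choose (k i) < (fam i).card
          + (V₁.card - (l₁.map k).sum).choose (k i) := by
        intro hgood
        have hQsum : U₁.card + (l₁.map k).sum ≤ sk := by
          have h1 : (l₁.map k).sum = ∑ j ∈ l₁.toFinset, k j :=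
            (List.sum_toFinset k hl₁ndup).symm
          have h2 : Disjoint M₁ l₁.toFinset := by
            rw [Finset.disjoint_right]
            intro j hj
            exact hglel j (hl₁glist j (List.mem_toFinset.1 hj))
          have h3 : ∑ j ∈ M₁, k j + ∑ j ∈ l₁.toFinset, k j
              = ∑ j ∈ M₁ ∪ l₁.toFinset, k j := (Finset.sum_union h2).symm
          have h4 : ∑ j ∈ M₁ ∪ l₁.toFinset, k j ≤ sk := by
            rw [hskdef]
            exact Finset.sum_le_sum_of_subset (subset_univ _)
          omega
        have hnuQ : m₀ ≤ V₁.card - (l₁.map k).sum := by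
          rw [hV₁card, hm₀def]
          omega
        have hgb := goodsBound i hgood
        have hm1 : m₀.choose (k i) ≤ (V₁.card - (l₁.map k).sum).choose (k i) :=
          Nat.choose_le_choose _ hnuQ
        have hm2 : V₁.card.choose (k i) ≤ n.choose (k i) :=
          Nat.choose_le_choose _ (by rw [hV₁card]; omega)
        have hfl := hfamloss i
        omega
      rcases List.append_eq_append_iff.1 (hglistdef ▸ hsplit :
          gl1 ++ gl2 = l₁ ++ i :: l₂) with ⟨a', hc, hb⟩ | ⟨c', hc, hd⟩
      · -- i is in the good part
        have higl2 : i ∈ gl2 := by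
          rw [hb]
          exact List.mem_append_right _ (List.mem_cons_self)
        have hgood : good i := by
          rw [hgl2def, Finset.mem_toList, mem_filter] at higl2
          exact higl2.2.2
        exact goodRoute hgood
      · rcases c' with _ | ⟨c₀, c''⟩
        · -- degenerate: i :: l₂ = gl2, so i is good
          simp only [List.nil_append] at hd
          have higl2 : i ∈ gl2 := by rw [← hd]; exact List.mem_cons_self
          have hgood : good i := by
            rw [hgl2def, Finset.mem_toList, mem_filter] at higl2
            exact higl2.2.2
          exact goodRoute hgood
        · -- i is in the nongood part
          have hc₀ : i = c₀ := (List.cons_eq_cons.1 hd).1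
          rw [← hc₀] at hc
          have hingl1 : i ∈ gl1 := by
            rw [hc]
            exact List.mem_append_right _ (List.mem_cons_self)
          have hnotgood : ¬ good i := by
            rw [hgl1def, Finset.mem_toList, mem_filter] at hingl1
            exact hingl1.2.2
          have hnotss : ¬ ssparse i := by
            intro hss
            exact hiM₁ (hT1M (by rw [hT1def, mem_filter]; exact ⟨mem_univ i, hss⟩))
          -- bound on the prefix sum
          have hQle : (l₁.map k).sum ≤ K * Mstar := by
            have h1 : ∀ x ∈ l₁.map k, x ≤ K := by
              intro x hx
              obtain ⟨j, _, rfl⟩ := List.mem_map.1 hx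
              exact hkK j
            have h2 : (l₁.map k).sum ≤ (l₁.map k).length * K := by
              have := List.sum_le_card_nsmul (l₁.map k) K h1
              simpa [smul_eq_mul] using this
            have h3 : l₁.length < gl1.length := by
              rw [hc, List.length_append, List.length_cons]
              omega
            have h4 : gl1.length ≤ Mstar := by
              rw [hgl1def, Finset.length_toList]
              refine le_trans (card_le_card ?_) hNGcard
              intro j hj
              rw [mem_filter] at hj ⊢
              exact ⟨hj.1, hj.2.2⟩
            have h5 : (l₁.map k).length = l₁.length := List.length_map _
            calc (l₁.map k).sum ≤ (l₁.map k).length * K := h2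
              _ = l₁.length * K := by rw [h5]
              _ ≤ Mstar * K := Nat.mul_le_mul_right _ (by omega)
              _ = K * Mstar := mul_comm _ _
          -- counting bounds
          have hCn'pos : 0 < (n-1).choose (k i - 1) := by
            apply Nat.choose_pos
            have := hkn i
            omega
          have hXle : (V₁.card - 1).choose (k i - 1) ≤ (n-1).choose (k i - 1) :=
            Nat.choose_le_choose _ (by rw [hV₁card]; omega)
          have hpa6 := pa6 V₁.card (k i) (hk1 i) ((l₁.map k).sum)
          have hlossB : n.choose (k i) ≤ V₁.card.choose (k i)
              + 2*K * ((n-1).choose (k i - 1)) := by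
            have h := pa6 n (k i) (hk1 i) (U₁.card)
            have h2 : (n - U₁.card).choose (k i) = V₁.card.choose (k i) := by
              rw [hV₁card]
            have h3 : U₁.card * ((n-1).choose (k i - 1))
                ≤ 2*K * ((n-1).choose (k i - 1)) := Nat.mul_le_mul_right _ hU₁card
            omega
          have hFbig : (K * Mstar + 2*K + 1) * ((n-1).choose (k i - 1)) ≤ (F i).card := by
            have h1 := nongoodBound i hnotss
            have h2 : n * ((n-1).choose (k i - 1)) = (k i) * n.choose (k i) :=
              pa5 n (k i) (hk1 i) hn1
            have h3 : ((K * Mstar + 2*K + 1) * ((n-1).choose (k i - 1))) * n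
                ≤ (F i).card * n := by
              calc ((K * Mstar + 2*K + 1) * ((n-1).choose (k i - 1))) * n
                  = (K * Mstar + 2*K + 1) * (n * ((n-1).choose (k i - 1))) := by ring
                _ = (K * Mstar + 2*K + 1) * ((k i) * n.choose (k i)) := by rw [h2]
                _ = (K * Mstar + 2*K + 1) * (k i) * n.choose (k i) := by ring
                _ ≤ (F i).card * n := h1
            exact Nat.le_of_mul_le_mul_right h3 (by omega)
          have hfl := hfamloss i
          have hQX : (l₁.map k).sum * ((V₁.card - 1).choose (k i - 1))
              ≤ (K * Mstar) * ((n-1).choose (k i - 1)) :=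
            Nat.mul_le_mul hQle hXle
          have hexp : (K * Mstar + 2*K + 1) * ((n-1).choose (k i - 1))
              = (K * Mstar) * ((n-1).choose (k i - 1))
                + 2*K * ((n-1).choose (k i - 1)) + ((n-1).choose (k i - 1)) := by ring
          omega
    -- run the greedy chain
    obtain ⟨eg, hegmem, hegpw⟩ := greedyChain k glist V₁ fam hglnd
      (fun i _ => hfamsub i) hcondG
    -- final assembly
    refine ⟨fun i => if i ∈ M₁ then eP i else eg i, ?_, ?_⟩
    · intro i
      beta_reduce
      by_cases hi : i ∈ M₁
      · rw [if_pos hi]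
        exact hPmem i hi
      · rw [if_neg hi]
        exact hfamF i (hegmem i (hglmem i hi))
    · intro i j hij
      beta_reduce
      have hdisjUg : ∀ j : Fin t, j ∉ M₁ → Disjoint U₁ (eg j) := by
        intro j hj
        have h1 : eg j ∈ fam j := hegmem j (hglmem j hj)
        rw [hfamdef, mem_filter] at h1
        exact h1.2.symm
      by_cases hi : i ∈ M₁ <;> by_cases hj : j ∈ M₁
      · rw [if_pos hi, if_pos hj]
        exact hPdisj i hi j hj hij
      · rw [if_pos hi, if_neg hj]
        have h3 : eP i ⊆ U₁ := by
          rw [hU₁def]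
          exact Finset.subset_biUnion_of_mem eP hi
        exact Finset.disjoint_of_subset_left h3 (hdisjUg j hj)
      · rw [if_neg hi, if_pos hj]
        have h3 : eP j ⊆ U₁ := by
          rw [hU₁def]
          exact Finset.subset_biUnion_of_mem eP hj
        exact (Finset.disjoint_of_subset_left h3 (hdisjUg i hi)).symm
      · rw [if_neg hi, if_neg hj]
        haveI : Std.Symm (fun a b : Fin t => Disjoint (eg a) (eg b)) := ⟨fun a b h => Disjoint.symm h⟩
        exact List.Pairwise.forall hegpw
          (hglmem i hi) (hglmem j hj) hij
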